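/- Let L ≥ 1, filter sizes k_1,…,k_L ≥ 1, strides s_1,…,s_L ≥ 1, S_ℓ := s_1⋯s_{ℓ−1}, k := k_1 + Σ_{ℓ=2}^L (k_ℓ−1)S_ℓ, d_L ≥ 1, and d_{ℓ−1} = k_ℓ + (d_ℓ−1)s_ℓ. For w ∈ ℝ^k the following are equivalent: (i) there exist filters w_ℓ ∈ ℝ^{k_ℓ} (1 ≤ ℓ ≤ L) with α_{w, s_1⋯s_L} = α_{w_L,s_L} ∘ ⋯ ∘ α_{w_1,s_1} as linear maps ℝ^{d_0} → ℝ^{d_L}; (ii) the homogeneous polynomial π_1(w) ∈ ℝ[x,y] of degree k−1 admits a factorization π_1(w) = P_L ⋯ P_1 where each P_ℓ ∈ ℝ[x,y] is homogeneous of degree S_ℓ(k_ℓ−1) and all monomials of P_ℓ involve only x^{S_ℓ} and y^{S_ℓ}. -/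

import Mathlib

/-- Convolution with filter `w : Fin k → ℝ` and stride `s`, as a map
`(Fin d → ℝ) → (Fin d' → ℝ)`: the `i`-th output entry is `∑ j, w j * x (i*s + j)`
(out-of-range indices contribute `0`, which does not occur when `d = k + (d'-1)*s`). -/
def conv {k : ℕ} (s d d' : ℕ) (w : Fin k → ℝ) (x : Fin d → ℝ) : Fin d' → ℝ :=
  fun i => ∑ j : Fin k,
    if h : i.val * s + j.val < d then w j * x ⟨i.val * s + j.val, h⟩ else 0

/-- The composition `α_{w_{L-1},s_{L-1}} ∘ ⋯ ∘ α_{w_0,s_0}` of convolutional layers. -/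
def chainConv (k s d : ℕ → ℕ) (w : (i : ℕ) → Fin (k i) → ℝ) :
    (L : ℕ) → (Fin (d 0) → ℝ) → (Fin (d L) → ℝ)
  | 0 => id
  | (L + 1) => fun x => conv (s L) (d L) (d (L + 1)) (w L) (chainConv k s d w L x)

/-- `π_s(w) = ∑_{j=0}^{k-1} w[j] · x^{s(k-1-j)} · y^{s·j}`. -/
noncomputable def piP (s : ℕ) {k : ℕ} (w : Fin k → ℝ) : MvPolynomial (Fin 2) ℝ :=
  ∑ j : Fin k, MvPolynomial.C (w j) * MvPolynomial.X 0 ^ (s * (k - 1 - j.val)) *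
    MvPolynomial.X 1 ^ (s * j.val)

namespace Stmt2Aux

open Finset MvPolynomial

/-! ### extension of filters by zero -/

def ext0 {n : ℕ} (w : Fin n → ℝ) : ℕ → ℝ := fun t => if h : t < n then w ⟨t, h⟩ else 0

lemma ext0_lt {n : ℕ} (w : Fin n → ℝ) {t : ℕ} (h : t < n) : ext0 w t = w ⟨t, h⟩ := by
  simp [ext0, h]

lemma ext0_eq_zero {n : ℕ} (w : Fin n → ℝ) {t : ℕ} (h : n ≤ t) : ext0 w t = 0 := by
  simp [ext0, Nat.not_lt.mpr h]

/-! ### convolution on ℕ-indexed sequences -/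

def convF (s k : ℕ) (w x : ℕ → ℝ) : ℕ → ℝ :=
  fun i => ∑ j ∈ Finset.range k, w j * x (i * s + j)

def compF (s k0 k1 : ℕ) (w0 w1 : ℕ → ℝ) : ℕ → ℝ :=
  fun t => ∑ j ∈ Finset.range k1, ∑ m ∈ Finset.range k0,
    if m + j * s = t then w1 j * w0 m else 0

lemma compF_eq_zero (s k0 k1 : ℕ) (w0 w1 : ℕ → ℝ) {t : ℕ}
    (ht : k0 + (k1 - 1) * s ≤ t) : compF s k0 k1 w0 w1 t = 0 := by
  unfold compF
  refine Finset.sum_eq_zero fun j hj => Finset.sum_eq_zero fun m hm => ?_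
  have hjr := Finset.mem_range.mp hj
  have hmr := Finset.mem_range.mp hm
  have hj' : j * s ≤ (k1 - 1) * s := Nat.mul_le_mul_right s (by omega)
  rw [if_neg]
  omega

lemma conv_eq {k : ℕ} (s d d' : ℕ) (w : Fin k → ℝ) (x : Fin d → ℝ) (i : Fin d')
    (hd : d = k + (d' - 1) * s) (hd' : 1 ≤ d') :
    conv s d d' w x i = convF s k (ext0 w) (ext0 x) i.val := by
  have hi : i.val ≤ d' - 1 := by have := i.isLt; omega
  have key : ∀ j, j < k → i.val * s + j < d := by
    intro j hj
    have h1 : i.val * s ≤ (d' - 1) * s := Nat.mul_le_mul_right s hi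
    omega
  have step : conv s d d' w x i = ∑ j : Fin k, ext0 w j.val * ext0 x (i.val * s + j.val) := by
    show (∑ j : Fin k, _) = _
    refine Finset.sum_congr rfl fun j _ => ?_
    rw [dif_pos (key j.val j.isLt), ext0_lt w j.isLt, ext0_lt x (key j.val j.isLt)]
  rw [step]
  exact Fin.sum_univ_eq_sum_range (fun j => ext0 w j * ext0 x (i.val * s + j)) k

lemma convF_convF (s0 s1 k0 k1 : ℕ) (w0 w1 x : ℕ → ℝ) (i : ℕ) :
    convF s1 k1 w1 (fun t => convF s0 k0 w0 x t) i
      = convF (s0 * s1) (k0 + (k1 - 1) * s0) (compF s0 k0 k1 w0 w1) x i := by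
  unfold convF compF
  have hmem : ∀ j ∈ range k1, ∀ m ∈ range k0, m + j * s0 ∈ range (k0 + (k1 - 1) * s0) := by
    intro j hj m hm
    have hj' : j * s0 ≤ (k1 - 1) * s0 :=
      Nat.mul_le_mul_right s0 (by have := mem_range.mp hj; omega)
    have := mem_range.mp hm
    exact mem_range.mpr (by omega)
  calc (∑ j ∈ range k1, w1 j * (∑ m ∈ range k0, w0 m * x ((i * s1 + j) * s0 + m)))
      = ∑ j ∈ range k1, ∑ m ∈ range k0,
          w1 j * w0 m * x (i * (s0 * s1) + (m + j * s0)) := by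
        refine sum_congr rfl fun j _ => ?_
        rw [Finset.mul_sum]
        refine sum_congr rfl fun m _ => ?_
        have : (i * s1 + j) * s0 + m = i * (s0 * s1) + (m + j * s0) := by ring
        rw [this, mul_assoc]
    _ = ∑ j ∈ range k1, ∑ m ∈ range k0, ∑ t ∈ range (k0 + (k1 - 1) * s0),
          if m + j * s0 = t then w1 j * w0 m * x (i * (s0 * s1) + t) else 0 := by
        refine sum_congr rfl fun j hj => sum_congr rfl fun m hm => ?_
        rw [Finset.sum_ite_eq (range (k0 + (k1 - 1) * s0)) (m + j * s0)
          (fun t => w1 j * w0 m * x (i * (s0 * s1) + t)), if_pos (hmem j hj m hm)]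
    _ = ∑ t ∈ range (k0 + (k1 - 1) * s0),
        (∑ j ∈ range k1, ∑ m ∈ range k0, if m + j * s0 = t then w1 j * w0 m else 0)
          * x (i * (s0 * s1) + t) := by
        rw [show (∑ j ∈ range k1, ∑ m ∈ range k0, ∑ t ∈ range (k0 + (k1 - 1) * s0),
            if m + j * s0 = t then w1 j * w0 m * x (i * (s0 * s1) + t) else 0)
          = ∑ j ∈ range k1, ∑ t ∈ range (k0 + (k1 - 1) * s0), ∑ m ∈ range k0,
            if m + j * s0 = t then w1 j * w0 m * x (i * (s0 * s1) + t) else 0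
          from sum_congr rfl fun j _ => Finset.sum_comm, Finset.sum_comm]
        refine sum_congr rfl fun t _ => ?_
        rw [Finset.sum_mul]
        refine sum_congr rfl fun j _ => ?_
        rw [Finset.sum_mul]
        refine sum_congr rfl fun m _ => ?_
        rw [ite_mul, zero_mul]

/-! ### monomials in two variables -/

noncomputable def sg (a b : ℕ) : Fin 2 →₀ ℕ := Finsupp.single 0 a + Finsupp.single 1 b

@[simp] lemma sg_apply0 (a b : ℕ) : sg a b 0 = a := by simp [sg]
@[simp] lemma sg_apply1 (a b : ℕ) : sg a b 1 = b := by simp [sg]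

lemma sg_eq_of (m : Fin 2 →₀ ℕ) : m = sg (m 0) (m 1) := by
  ext i; fin_cases i <;> simp [sg]

lemma sg_degree (a b : ℕ) : (sg a b).degree = a + b := by
  rw [Finsupp.degree_apply]
  rw [Finset.sum_subset (Finset.subset_univ (sg a b).support)
    (by intro x _ hx; exact Finsupp.notMem_support_iff.mp hx)]
  rw [Fin.sum_univ_two]; simp

lemma C_mul_XX (c : ℝ) (a b : ℕ) :
    (C c : MvPolynomial (Fin 2) ℝ) * X 0 ^ a * X 1 ^ b = monomial (sg a b) c := by
  rw [X_pow_eq_monomial, X_pow_eq_monomial, C_apply, monomial_mul, monomial_mul]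
  simp [sg]

/-! ### the polynomial attached to an ℕ-indexed filter -/

noncomputable def piN (s K : ℕ) (a : ℕ → ℝ) : MvPolynomial (Fin 2) ℝ :=
  ∑ j ∈ Finset.range K, monomial (sg (s * (K - 1 - j)) (s * j)) (a j)

lemma piP_eq_piN (s : ℕ) {k : ℕ} (w : Fin k → ℝ) : piP s w = piN s k (ext0 w) := by
  unfold piP piN
  rw [show (∑ j : Fin k, MvPolynomial.C (w j) * MvPolynomial.X 0 ^ (s * (k - 1 - j.val)) *
      MvPolynomial.X 1 ^ (s * j.val))
    = ∑ j : Fin k, monomial (sg (s * (k - 1 - j.val)) (s * j.val)) (ext0 w j.val) from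
      Finset.sum_congr rfl fun j _ => by rw [C_mul_XX]; simp [ext0, j.isLt]]
  exact Fin.sum_univ_eq_sum_range (fun j => monomial (sg (s * (k - 1 - j)) (s * j)) (ext0 w j)) k

lemma piN_congr (s K : ℕ) {a b : ℕ → ℝ} (h : ∀ t < K, a t = b t) :
    piN s K a = piN s K b := by
  unfold piN
  exact Finset.sum_congr rfl fun j hj => by rw [h j (mem_range.mp hj)]

lemma piN_comp (s k0 k1 : ℕ) (w0 w1 : ℕ → ℝ) :
    piN 1 (k0 + (k1 - 1) * s) (compF s k0 k1 w0 w1) = piN s k1 w1 * piN 1 k0 w0 := by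
  unfold piN compF
  rw [Finset.sum_mul_sum]
  set N := k0 + (k1 - 1) * s with hN
  have hmem : ∀ j ∈ range k1, ∀ m ∈ range k0, m + j * s ∈ range N := by
    intro j hj m hm
    have hj' : j * s ≤ (k1 - 1) * s :=
      Nat.mul_le_mul_right s (by have := mem_range.mp hj; omega)
    have := mem_range.mp hm
    exact mem_range.mpr (by omega)
  calc (∑ t ∈ range N, monomial (sg (1 * (N - 1 - t)) (1 * t))
          (∑ j ∈ range k1, ∑ m ∈ range k0, if m + j * s = t then w1 j * w0 m else 0))
      = ∑ t ∈ range N, ∑ j ∈ range k1, ∑ m ∈ range k0,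
          if m + j * s = t then monomial (sg (1 * (N - 1 - t)) (1 * t)) (w1 j * w0 m) else 0 := by
        refine sum_congr rfl fun t _ => ?_
        rw [map_sum]
        refine sum_congr rfl fun j _ => ?_
        rw [map_sum]
        refine sum_congr rfl fun m _ => ?_
        split <;> simp
    _ = ∑ j ∈ range k1, ∑ m ∈ range k0,
          monomial (sg (1 * (N - 1 - (m + j * s))) (1 * (m + j * s))) (w1 j * w0 m) := by
        rw [show (∑ t ∈ range N, ∑ j ∈ range k1, ∑ m ∈ range k0,
            if m + j * s = t then monomial (sg (1 * (N - 1 - t)) (1 * t)) (w1 j * w0 m) else 0)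
          = ∑ j ∈ range k1, ∑ t ∈ range N, ∑ m ∈ range k0,
            if m + j * s = t then monomial (sg (1 * (N - 1 - t)) (1 * t)) (w1 j * w0 m) else 0
          from Finset.sum_comm]
        refine sum_congr rfl fun j hj => ?_
        rw [Finset.sum_comm]
        refine sum_congr rfl fun m hm => ?_
        rw [Finset.sum_ite_eq (range N) (m + j * s)
            (fun t => monomial (sg (1 * (N - 1 - t)) (1 * t)) (w1 j * w0 m)),
           if_pos (hmem j hj m hm)]
    _ = ∑ j ∈ range k1, ∑ m ∈ range k0,
          monomial (sg (s * (k1 - 1 - j)) (s * j)) (w1 j) *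
          monomial (sg (1 * (k0 - 1 - m)) (1 * m)) (w0 m) := by
        refine sum_congr rfl fun j hj => sum_congr rfl fun m hm => ?_
        rw [monomial_mul]
        have hjr := mem_range.mp hj
        have hmr := mem_range.mp hm
        have hsg : sg (s * (k1 - 1 - j)) (s * j) + sg (1 * (k0 - 1 - m)) (1 * m)
            = sg (s * (k1 - 1 - j) + 1 * (k0 - 1 - m)) (s * j + 1 * m) := by
          unfold sg
          ext i; fin_cases i <;> simp [Finsupp.single_apply]
        have e1 : s * (k1 - 1 - j) = (k1 - 1) * s - j * s := by
          rw [mul_comm s, Nat.sub_mul]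
        have e2 : j * s ≤ (k1 - 1) * s := Nat.mul_le_mul_right s (by omega)
        have hexp1 : 1 * (N - 1 - (m + j * s)) = s * (k1 - 1 - j) + 1 * (k0 - 1 - m) := by
          rw [hN, e1]; omega
        have hexp2 : 1 * (m + j * s) = s * j + 1 * m := by
          rw [mul_comm s j]; ring
        rw [hsg, hexp1, hexp2]

lemma piN_isHomogeneous (s K : ℕ) (a : ℕ → ℝ) :
    (piN s K a).IsHomogeneous (s * (K - 1)) := by
  refine IsHomogeneous.sum _ _ _ fun j hj => ?_
  refine isHomogeneous_monomial _ ?_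
  rw [sg_degree]
  have := mem_range.mp hj
  rw [← Nat.mul_add]
  congr 1
  omega

lemma piN_support (s K : ℕ) (a : ℕ → ℝ) :
    ∀ m ∈ (piN s K a).support, s ∣ m 0 ∧ s ∣ m 1 := by
  intro m hm
  unfold piN at hm
  have hsub := MvPolynomial.support_sum hm
  obtain ⟨j, hj, hmj⟩ := Finset.mem_biUnion.mp hsub
  have := MvPolynomial.support_monomial_subset hmj
  have hm' : m = sg (s * (K - 1 - j)) (s * j) := Finset.mem_singleton.mp this
  subst hm'
  exact ⟨⟨K - 1 - j, by simp⟩, ⟨j, by simp⟩⟩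

lemma coeff_piN (s K : ℕ) (a : ℕ → ℝ) (hs : 1 ≤ s) (t : ℕ) (ht : t < K) :
    coeff (sg (s * (K - 1 - t)) (s * t)) (piN s K a) = a t := by
  unfold piN
  rw [MvPolynomial.coeff_sum]
  rw [Finset.sum_eq_single t]
  · rw [coeff_monomial, if_pos rfl]
  · intro j hj hne
    rw [coeff_monomial, if_neg]
    intro h
    have h1 : s * j = s * t := by
      have := congrArg (fun f => f 1) h
      simpa using this
    exact hne (Nat.eq_of_mul_eq_mul_left hs h1)
  · intro h; exact absurd (mem_range.mpr ht) h

lemma isHomog_eq_piN {Q : MvPolynomial (Fin 2) ℝ} {s K : ℕ} (hs : 1 ≤ s) (hK : 1 ≤ K)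
    (hhom : Q.IsHomogeneous (s * (K - 1)))
    (hdvd : ∀ m ∈ Q.support, s ∣ m 0 ∧ s ∣ m 1) :
    Q = piN s K (fun j => coeff (sg (s * (K - 1 - j)) (s * j)) Q) := by
  apply MvPolynomial.ext
  intro m
  unfold piN
  rw [MvPolynomial.coeff_sum]
  by_cases hm : m ∈ Q.support
  · obtain ⟨⟨a, ha⟩, ⟨b, hb⟩⟩ := hdvd m hm
    have hw : (Finsupp.weight 1) m = s * (K - 1) := hhom (mem_support_iff.mp hm)
    have hdeg : m 0 + m 1 = s * (K - 1) := by
      have h1 : m.degree = s * (K - 1) := by rw [Finsupp.degree_eq_weight_one]; exact hw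
      have h2 : m.degree = m 0 + m 1 := by
        calc m.degree = (sg (m 0) (m 1)).degree := by rw [← sg_eq_of m]
        _ = m 0 + m 1 := sg_degree _ _
      omega
    have hab : a + b = K - 1 := by
      refine Nat.eq_of_mul_eq_mul_left hs ?_
      rw [Nat.mul_add, ← ha, ← hb]
      exact hdeg
    have hbK : b < K := by omega
    have hmeq : m = sg (s * (K - 1 - b)) (s * b) := by
      rw [sg_eq_of m, ha, hb]
      congr 2
      omega
    rw [Finset.sum_eq_single b]
    · rw [coeff_monomial, if_pos hmeq.symm]
      exact congrArg (fun u => coeff u Q) hmeq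
    · intro j hj hne
      rw [coeff_monomial, if_neg]
      intro hcon
      have h1 : s * j = s * b := by
        have := congrArg (fun f => f 1) (hcon.trans hmeq)
        simpa using this
      exact hne (Nat.eq_of_mul_eq_mul_left hs h1)
    · intro hcon; exact absurd (mem_range.mpr hbK) hcon
  · have h0 : coeff m Q = 0 := MvPolynomial.notMem_support_iff.mp hm
    rw [h0]
    symm
    refine Finset.sum_eq_zero fun j hj => ?_
    rw [coeff_monomial]
    split
    · next h =>
        show coeff (sg (s * (K - 1 - j)) (s * j)) Q = 0
        rw [h]; exact h0
    · rfl

/-! ### the chain of composed filters -/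

def Ksz (k s : ℕ → ℕ) : ℕ → ℕ
  | 0 => k 0
  | (m + 1) => Ksz k s m + (k (m + 1) - 1) * ∏ j ∈ Finset.range (m + 1), s j

noncomputable def chF (k s : ℕ → ℕ) (w : (i : ℕ) → Fin (k i) → ℝ) : ℕ → ℕ → ℝ
  | 0 => ext0 (w 0)
  | (m + 1) => compF (∏ j ∈ Finset.range (m + 1), s j) (Ksz k s m) (k (m + 1))
      (chF k s w m) (ext0 (w (m + 1)))

lemma chF_eq_zero (k s : ℕ → ℕ) (w : (i : ℕ) → Fin (k i) → ℝ) :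
    ∀ m t, Ksz k s m ≤ t → chF k s w m t = 0
  | 0, t, ht => ext0_eq_zero _ ht
  | (m + 1), t, ht => compF_eq_zero _ _ _ _ _ ht

lemma piN_chF (k s : ℕ → ℕ) (w : (i : ℕ) → Fin (k i) → ℝ) (m : ℕ) :
    piN 1 (Ksz k s m) (chF k s w m)
      = ∏ i ∈ Finset.range (m + 1), piN (∏ j ∈ Finset.range i, s j) (k i) (ext0 (w i)) := by
  induction m with
  | zero => simp [Ksz, chF]
  | succ m ih =>
    rw [show Ksz k s (m + 1)
        = Ksz k s m + (k (m + 1) - 1) * ∏ j ∈ Finset.range (m + 1), s j from rfl,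
      show chF k s w (m + 1) = compF (∏ j ∈ Finset.range (m + 1), s j) (Ksz k s m) (k (m + 1))
        (chF k s w m) (ext0 (w (m + 1))) from rfl,
      piN_comp, ih,
      Finset.prod_range_succ (fun i => piN (∏ j ∈ Finset.range i, s j) (k i) (ext0 (w i)))
        (m + 1),
      mul_comm]

lemma chain_eq (k s d : ℕ → ℕ) (w : (i : ℕ) → Fin (k i) → ℝ) (L : ℕ)
    (hd : ∀ i < L, d i = k i + (d (i + 1) - 1) * s i)
    (hd1 : ∀ i ≤ L, 1 ≤ d i) :
    ∀ m, m < L → ∀ (x : Fin (d 0) → ℝ) (i : Fin (d (m + 1))),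
      chainConv k s d w (m + 1) x i
        = convF (∏ j ∈ Finset.range (m + 1), s j) (Ksz k s m) (chF k s w m) (ext0 x) i.val := by
  intro m
  induction m with
  | zero =>
    intro hm x i
    have h := conv_eq (s 0) (d 0) (d 1) (w 0) x i (hd 0 hm) (hd1 1 hm)
    rw [show chainConv k s d w 1 x i = conv (s 0) (d 0) (d 1) (w 0) x i from rfl, h]
    simp [Ksz, chF, Finset.prod_range_one]
  | succ m ih =>
    intro hm x i
    have hdm2 : 1 ≤ d (m + 2) := hd1 (m + 2) hm
    rw [show chainConv k s d w (m + 2) x i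
        = conv (s (m + 1)) (d (m + 1)) (d (m + 2)) (w (m + 1)) (chainConv k s d w (m + 1) x) i
        from rfl,
      conv_eq (s (m + 1)) (d (m + 1)) (d (m + 2)) (w (m + 1)) _ i (hd (m + 1) hm) hdm2]
    have hrepl : convF (s (m + 1)) (k (m + 1)) (ext0 (w (m + 1)))
          (ext0 (chainConv k s d w (m + 1) x)) i.val
        = convF (s (m + 1)) (k (m + 1)) (ext0 (w (m + 1)))
          (fun t => convF (∏ j ∈ Finset.range (m + 1), s j) (Ksz k s m) (chF k s w m)
            (ext0 x) t) i.val := by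
      unfold convF
      refine Finset.sum_congr rfl fun j hj => ?_
      congr 1
      have hidx : i.val * s (m + 1) + j < d (m + 1) := by
        have hiv : i.val < d (m + 2) := i.isLt
        have h1 : i.val ≤ d (m + 2) - 1 := by omega
        have h2 : i.val * s (m + 1) ≤ (d (m + 2) - 1) * s (m + 1) := Nat.mul_le_mul_right _ h1
        have hdm : d (m + 1) = k (m + 1) + (d (m + 2) - 1) * s (m + 1) := hd (m + 1) hm
        have := Finset.mem_range.mp hj
        omega
      rw [ext0_lt _ hidx]
      exact ih (Nat.lt_of_succ_lt hm) x ⟨i.val * s (m + 1) + j, hidx⟩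
    rw [hrepl, convF_convF]
    rw [show (∏ j ∈ Finset.range (m + 2), s j)
        = (∏ j ∈ Finset.range (m + 1), s j) * s (m + 1) from Finset.prod_range_succ s (m + 1)]
    rfl

end Stmt2Aux

open Finset MvPolynomial Stmt2Aux

theorem stmt_2 (L : ℕ) (hL : 1 ≤ L) (k s : ℕ → ℕ)
    (hk : ∀ i < L, 1 ≤ k i) (hs : ∀ i < L, 1 ≤ s i)
    (d : ℕ → ℕ) (hdL : 1 ≤ d L) (hd : ∀ i < L, d i = k i + (d (i + 1) - 1) * s i)
    (S : ℕ → ℕ) (hS : ∀ i, S i = ∏ j ∈ Finset.range i, s j)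
    (K : ℕ) (hK : K = k 0 + ∑ i ∈ Finset.Ico 1 L, (k i - 1) * S i)
    (v : Fin K → ℝ) :
    (∃ w : (i : ℕ) → Fin (k i) → ℝ,
        conv (∏ i ∈ Finset.range L, s i) (d 0) (d L) v = chainConv k s d w L) ↔
    (∃ P : ℕ → MvPolynomial (Fin 2) ℝ,
        piP 1 v = ∏ i ∈ Finset.range L, P i ∧
        ∀ i < L, (P i).IsHomogeneous (S i * (k i - 1)) ∧
          ∀ m ∈ (P i).support, S i ∣ m 0 ∧ S i ∣ m 1) := by
  have hd1 : ∀ i ≤ L, 1 ≤ d i := by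
    have main : ∀ j i, i + j = L → 1 ≤ d i := by
      intro j
      induction j with
      | zero =>
        intro i hi
        have : i = L := by omega
        rw [this]; exact hdL
      | succ j ih =>
        intro i hi
        have h2 : 1 ≤ d (i + 1) := ih (i + 1) (by omega)
        have h3 := hd i (by omega)
        have h4 := hk i (by omega)
        omega
    intro i hi; exact main (L - i) i (by omega)
  have hKeq : ∀ m, m < L → Ksz k s m = k 0 + ∑ i ∈ Finset.Ico 1 (m + 1), (k i - 1) * S i := by
    intro m
    induction m with
    | zero => intro _; simp [Ksz]
    | succ m ih =>
      intro hm
      rw [show Ksz k s (m + 1)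
          = Ksz k s m + (k (m + 1) - 1) * ∏ j ∈ Finset.range (m + 1), s j from rfl,
        ih (by omega), Finset.sum_Ico_succ_top (by omega : 1 ≤ m + 1), ← hS (m + 1)]
      ring
  have hd0 : ∀ m, m < L →
      d 0 = Ksz k s m + (d (m + 1) - 1) * ∏ j ∈ Finset.range (m + 1), s j := by
    intro m
    induction m with
    | zero =>
      intro hm
      rw [Finset.prod_range_one]
      exact hd 0 hm
    | succ m ih =>
      intro hm
      have h1 := ih (by omega)
      have h2 : d (m + 1) = k (m + 1) + (d (m + 2) - 1) * s (m + 1) := hd (m + 1) hm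
      have hk1 := hk (m + 1) (by omega)
      have e : (d (m + 1) - 1) * ∏ j ∈ Finset.range (m + 1), s j
          = (k (m + 1) - 1) * (∏ j ∈ Finset.range (m + 1), s j)
            + ((d (m + 2) - 1) * s (m + 1)) * ∏ j ∈ Finset.range (m + 1), s j := by
        rw [← Nat.add_mul]; congr 1; omega
      have e3 : (d (m + 2) - 1) * ∏ j ∈ Finset.range (m + 2), s j
          = ((d (m + 2) - 1) * s (m + 1)) * ∏ j ∈ Finset.range (m + 1), s j := by
        rw [Finset.prod_range_succ]; ring
      show d 0 = Ksz k s m + (k (m + 1) - 1) * (∏ j ∈ Finset.range (m + 1), s j)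
          + (d (m + 2) - 1) * ∏ j ∈ Finset.range (m + 2), s j
      omega
  obtain ⟨M, rfl⟩ : ∃ M, L = M + 1 := ⟨L - 1, by omega⟩
  have hML : M < M + 1 := Nat.lt_succ_self M
  have hKM : K = Ksz k s M := by rw [hKeq M hML, hK]
  have hd0M : d 0 = K + (d (M + 1) - 1) * ∏ j ∈ Finset.range (M + 1), s j := by
    rw [hKM]; exact hd0 M hML
  have hdM1 : 1 ≤ d (M + 1) := hd1 (M + 1) le_rfl
  constructor
  · rintro ⟨w, hw⟩
    have hfil : ext0 v = chF k s w M := by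
      funext t
      by_cases ht : t < K
      · set x : Fin (d 0) → ℝ := fun u => if u.val = t then 1 else 0 with hxdef
        have htd0 : t < d 0 := by omega
        have hx : ∀ u : ℕ, ext0 x u = if u = t then 1 else 0 := by
          intro u
          by_cases hu : u < d 0
          · rw [ext0_lt _ hu]
          · rw [ext0_eq_zero _ (Nat.not_lt.mp hu), if_neg (by omega)]
        have heval : ∀ (K' : ℕ) (a : ℕ → ℝ), t < K' →
            convF (∏ j ∈ Finset.range (M + 1), s j) K' a (ext0 x) 0 = a t := by
          intro K' a htK
          unfold convF
          calc (∑ u ∈ Finset.range K',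
                a u * ext0 x (0 * (∏ j ∈ Finset.range (M + 1), s j) + u))
              = ∑ u ∈ Finset.range K', if u = t then a u else 0 := by
                refine Finset.sum_congr rfl fun u _ => ?_
                rw [show 0 * (∏ j ∈ Finset.range (M + 1), s j) + u = u by ring, hx u]
                split <;> simp
            _ = a t := by
                rw [Finset.sum_ite_eq' (Finset.range K') t a,
                  if_pos (Finset.mem_range.mpr htK)]
        have hpos : 0 < d (M + 1) := hdM1
        have hconv := conv_eq (∏ j ∈ Finset.range (M + 1), s j) (d 0) (d (M + 1)) v x
          ⟨0, hpos⟩ hd0M hdM1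
        have hchain := chain_eq k s d w (M + 1) hd hd1 M hML x ⟨0, hpos⟩
        have hcc : conv (∏ i ∈ Finset.range (M + 1), s i) (d 0) (d (M + 1)) v x ⟨0, hpos⟩
            = chainConv k s d w (M + 1) x ⟨0, hpos⟩ := by rw [hw]
        have e1 : conv (∏ i ∈ Finset.range (M + 1), s i) (d 0) (d (M + 1)) v x ⟨0, hpos⟩
            = ext0 v t := hconv.trans (heval K (ext0 v) ht)
        have e2 : chainConv k s d w (M + 1) x ⟨0, hpos⟩ = chF k s w M t :=
          hchain.trans (heval (Ksz k s M) (chF k s w M) (by omega))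
        exact e1.symm.trans (hcc.trans e2)
      · rw [ext0_eq_zero v (by omega), chF_eq_zero k s w M t (by omega)]
    refine ⟨fun i => piP (S i) (w i), ?_, ?_⟩
    · calc piP 1 v = piN 1 K (ext0 v) := piP_eq_piN 1 v
        _ = piN 1 (Ksz k s M) (chF k s w M) := by rw [← hKM, hfil]
        _ = ∏ i ∈ Finset.range (M + 1),
              piN (∏ j ∈ Finset.range i, s j) (k i) (ext0 (w i)) := piN_chF k s w M
        _ = ∏ i ∈ Finset.range (M + 1), piP (S i) (w i) := by
            refine Finset.prod_congr rfl fun i _ => ?_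
            rw [piP_eq_piN, hS i]
    · intro i hi
      refine ⟨?_, ?_⟩
      · show (piP (S i) (w i)).IsHomogeneous (S i * (k i - 1))
        rw [piP_eq_piN]; exact piN_isHomogeneous (S i) (k i) (ext0 (w i))
      · show ∀ m ∈ (piP (S i) (w i)).support, S i ∣ m 0 ∧ S i ∣ m 1
        intro m hm
        rw [piP_eq_piN] at hm
        exact piN_support (S i) (k i) (ext0 (w i)) m hm
  · rintro ⟨P, hPv, hPh⟩
    have hSpos : ∀ i < M + 1, 1 ≤ S i := by
      intro i hi
      rw [hS i]
      exact Finset.one_le_prod' fun j hj =>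
        hs j (by have := Finset.mem_range.mp hj; omega)
    set w : (i : ℕ) → Fin (k i) → ℝ :=
      fun i j => coeff (sg (S i * (k i - 1 - j.val)) (S i * j.val)) (P i) with hwdef
    have hPi : ∀ i < M + 1, P i = piN (S i) (k i) (ext0 (w i)) := by
      intro i hi
      have h1 := isHomog_eq_piN (hSpos i hi) (hk i hi) (hPh i hi).1 (hPh i hi).2
      rw [h1]
      refine piN_congr _ _ fun t htk => ?_
      rw [ext0_lt _ htk]
    have hprod : piN 1 K (ext0 v) = piN 1 (Ksz k s M) (chF k s w M) := by
      rw [← piP_eq_piN, hPv, piN_chF]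
      refine Finset.prod_congr rfl fun i hi => ?_
      rw [hPi i (Finset.mem_range.mp hi), hS i]
    have hfil : ∀ t, ext0 v t = chF k s w M t := by
      intro t
      by_cases ht : t < K
      · have h1 := coeff_piN 1 K (ext0 v) le_rfl t ht
        rw [← hKM] at hprod
        have h2 := coeff_piN 1 K (chF k s w M) le_rfl t ht
        rw [← h1, ← h2, hprod]
      · rw [ext0_eq_zero v (by omega), chF_eq_zero k s w M t (by omega)]
    refine ⟨w, ?_⟩
    funext x
    funext i
    have hconv := conv_eq (∏ j ∈ Finset.range (M + 1), s j) (d 0) (d (M + 1)) v x i hd0M hdM1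
    have hchain := chain_eq k s d w (M + 1) hd hd1 M hML x i
    rw [hconv, hchain, ← hKM]
    unfold convF
    exact Finset.sum_congr rfl fun j _ => by rw [hfil j]
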